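/- Fix i ∈ {1,…,n} and 1 ≤ k ≤ p. If x ∈ ℝ^d satisfies x_{(i−1)p+j} = 0 for all j with k ≤ j ≤ p, then the gradient g = ∇f_i(x) = ((L−μ)/4)(A_i x − e_{(i−1)p+1}) + μx satisfies g_{(i−1)p+j} = 0 for all j with k+1 ≤ j ≤ p; moreover, at every coordinate outside the i-th block of p coordinates, g equals μx, so g vanishes wherever x vanishes outside block i. -/

import Mathlib

open Finset
open scoped RealInnerProductSpace

/-- The `p × p` tridiagonal matrix with diagonal entries `2` except the last one, which is `ξ`,
and `-1` on the sub- and super-diagonal. -/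
noncomputable def Tmat (p : ℕ) (ξ : ℝ) : Matrix (Fin p) (Fin p) ℝ :=
  fun j k =>
    if j = k then (if (j : ℕ) = p - 1 then ξ else 2)
    else if (j : ℕ) + 1 = (k : ℕ) ∨ (k : ℕ) + 1 = (j : ℕ) then -1 else 0

/-- The `d × d` matrix (`d = np`, coordinates indexed by `Fin n × Fin p`) which is zero outside
the `i`-th diagonal `p × p` block, and whose `i`-th diagonal block is `Tmat p ξ`. -/
noncomputable def Amat (n p : ℕ) (ξ : ℝ) (i : Fin n) :
    Matrix (Fin n × Fin p) (Fin n × Fin p) ℝ :=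
  fun a b => if a.1 = i ∧ b.1 = i then Tmat p ξ a.2 b.2 else 0

/-- The component function
`f_i(x) = ((L−μ)/4) ((1/2)⟨x, A_i x⟩ − ⟨e_{(i−1)p+1}, x⟩) + (μ/2)‖x‖²`. -/
noncomputable def fComp1 (n p : ℕ) [NeZero p] (L μ ξ : ℝ) (i : Fin n)
    (x : EuclideanSpace ℝ (Fin n × Fin p)) : ℝ :=
  ((L - μ) / 4) *
      ((1 / 2) * (∑ a : Fin n × Fin p, ∑ b : Fin n × Fin p, x a * Amat n p ξ i a b * x b)
        - x (i, 0)) +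
    (μ / 2) * ‖x‖ ^ 2

lemma Tmat_symm (p : ℕ) (ξ : ℝ) (j k : Fin p) : Tmat p ξ j k = Tmat p ξ k j := by
  unfold Tmat
  rcases eq_or_ne j k with rfl | h
  · simp
  · rw [if_neg h, if_neg (Ne.symm h)]
    exact if_congr or_comm rfl rfl

lemma Amat_symm (n p : ℕ) (ξ : ℝ) (i : Fin n) (a b : Fin n × Fin p) :
    Amat n p ξ i a b = Amat n p ξ i b a := by
  unfold Amat
  exact if_congr and_comm (Tmat_symm p ξ a.2 b.2) rfl

lemma hasGradient_fComp1 (n p : ℕ) [NeZero p] (L μ ξ : ℝ) (i : Fin n)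
    (x : EuclideanSpace ℝ (Fin n × Fin p)) :
    HasGradientAt (fComp1 n p L μ ξ i)
      (WithLp.toLp 2 (fun a => ((L - μ) / 4) *
          ((∑ b : Fin n × Fin p, Amat n p ξ i a b * x b)
            - (if a = ((i, 0) : Fin n × Fin p) then 1 else 0)) + μ * x a :
        Fin n × Fin p → ℝ)) x := by
  set c := (L - μ) / 4 with hc
  rw [hasGradientAt_iff_hasFDerivAt]
  have hnorm : ∀ y : EuclideanSpace ℝ (Fin n × Fin p),
      ‖y‖ ^ 2 = ∑ a : Fin n × Fin p, y a * y a := by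
    intro y
    rw [← real_inner_self_eq_norm_sq, PiLp.inner_apply]
    simp [RCLike.inner_apply, sq]
  have hfun : fComp1 n p L μ ξ i = fun y : EuclideanSpace ℝ (Fin n × Fin p) =>
      c * ((1 / 2) * (∑ a : Fin n × Fin p, ∑ b : Fin n × Fin p, y a * Amat n p ξ i a b * y b)
        - y (i, 0)) + (μ / 2) * ∑ a : Fin n × Fin p, y a * y a := by
    funext y
    rw [fComp1, hnorm y]
  rw [hfun]
  have hS : HasFDerivAt (𝕜 := ℝ)
      (fun y : EuclideanSpace ℝ (Fin n × Fin p) =>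
        ∑ a : Fin n × Fin p, ∑ b : Fin n × Fin p, y a * Amat n p ξ i a b * y b)
      (∑ a : Fin n × Fin p, ∑ b : Fin n × Fin p,
        ((x a * Amat n p ξ i a b) • EuclideanSpace.proj b
          + x b • (Amat n p ξ i a b • EuclideanSpace.proj a))) x := by
    refine HasFDerivAt.fun_sum fun a _ => HasFDerivAt.fun_sum fun b _ => ?_
    have h := ((EuclideanSpace.proj (𝕜 := ℝ) a).hasFDerivAt (x := x)).mul_const
      (Amat n p ξ i a b) |>.mul ((EuclideanSpace.proj (𝕜 := ℝ) b).hasFDerivAt (x := x))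
    exact h
  have hN : HasFDerivAt (𝕜 := ℝ)
      (fun y : EuclideanSpace ℝ (Fin n × Fin p) => ∑ a : Fin n × Fin p, y a * y a)
      (∑ a : Fin n × Fin p,
        ((x a • EuclideanSpace.proj a) + x a • (EuclideanSpace.proj a :
          EuclideanSpace ℝ (Fin n × Fin p) →L[ℝ] ℝ))) x := by
    refine HasFDerivAt.fun_sum fun a _ => ?_
    have h := ((EuclideanSpace.proj (𝕜 := ℝ) a).hasFDerivAt (x := x)).mul
      ((EuclideanSpace.proj (𝕜 := ℝ) a).hasFDerivAt (x := x))
    exact h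
  have hD := (((hS.const_mul (1 / 2)).sub
    (EuclideanSpace.proj ((i, 0) : Fin n × Fin p)).hasFDerivAt).const_mul c).add
    (hN.const_mul (μ / 2))
  refine hD.congr_fderiv ?_
  apply ContinuousLinearMap.ext
  intro v
  simp only [ContinuousLinearMap.add_apply, ContinuousLinearMap.smul_apply,
    ContinuousLinearMap.sub_apply, ContinuousLinearMap.coe_sum', Finset.sum_apply,
    PiLp.proj_apply, smul_eq_mul, InnerProductSpace.toDual_apply_apply,
    PiLp.inner_apply, RCLike.inner_apply, conj_trivial]
  simp only [mul_comm (v _)]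
  have hT : ∑ a : Fin n × Fin p, ∑ b : Fin n × Fin p, x a * Amat n p ξ i a b * v b
      = ∑ a : Fin n × Fin p, ∑ b : Fin n × Fin p, x b * (Amat n p ξ i a b * v a) := by
    rw [Finset.sum_comm]
    refine Finset.sum_congr rfl fun a _ => Finset.sum_congr rfl fun b _ => ?_
    rw [Amat_symm]
    ring
  have hind : ∑ a : Fin n × Fin p,
      (if a = ((i, 0) : Fin n × Fin p) then (1 : ℝ) else 0) * v a = v (i, 0) := by
    simp [ite_mul]
  have hrhs : ∀ a : Fin n × Fin p,
      (c * ((∑ b : Fin n × Fin p, Amat n p ξ i a b * x b)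
          - (if a = ((i, 0) : Fin n × Fin p) then (1 : ℝ) else 0)) + μ * x a) * v a
      = c * (∑ b : Fin n × Fin p, x b * (Amat n p ξ i a b * v a))
          - c * ((if a = ((i, 0) : Fin n × Fin p) then (1 : ℝ) else 0) * v a)
          + μ * (x a * v a) := by
    intro a
    have h : ∑ b : Fin n × Fin p, x b * (Amat n p ξ i a b * v a)
        = (∑ b : Fin n × Fin p, Amat n p ξ i a b * x b) * v a := by
      rw [Finset.sum_mul]
      exact Finset.sum_congr rfl fun b _ => by ring
    rw [h]
    ring
  calc c * (1 / 2 * (∑ a : Fin n × Fin p, ∑ b : Fin n × Fin p,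
        (x a * Amat n p ξ i a b * v b + x b * (Amat n p ξ i a b * v a))) - v (i, 0))
        + μ / 2 * ∑ a : Fin n × Fin p, (x a * v a + x a * v a)
      = c * (1 / 2 * ((∑ a : Fin n × Fin p, ∑ b : Fin n × Fin p, x b * (Amat n p ξ i a b * v a))
            + ∑ a : Fin n × Fin p, ∑ b : Fin n × Fin p, x b * (Amat n p ξ i a b * v a))
          - v (i, 0))
        + μ / 2 * ((∑ a : Fin n × Fin p, x a * v a) + ∑ a : Fin n × Fin p, x a * v a) := by
        rw [Finset.sum_add_distrib]
        simp only [Finset.sum_add_distrib, hT]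
    _ = c * (∑ a : Fin n × Fin p, ∑ b : Fin n × Fin p, x b * (Amat n p ξ i a b * v a))
        - c * v (i, 0) + μ * ∑ a : Fin n × Fin p, x a * v a := by ring
    _ = ∑ a : Fin n × Fin p,
        ((c * ((∑ b : Fin n × Fin p, Amat n p ξ i a b * x b)
            - (if a = ((i, 0) : Fin n × Fin p) then (1 : ℝ) else 0)) + μ * x a) * v a) := by
        simp only [hrhs, Finset.sum_add_distrib, Finset.sum_sub_distrib, ← Finset.mul_sum, hind]

/-- Zero-chain property of the Case (1) hard instance: the gradient of `f_i` at `x` equals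
`((L−μ)/4)(A_i x − e_{(i−1)p+1}) + μ x` coordinatewise; if the coordinates `k, …, p` of
block `i` of `x` vanish, then the coordinates `k+1, …, p` of block `i` of `∇f_i(x)`
vanish; and outside block `i` the gradient equals `μ x` coordinatewise. -/
theorem stmt14 (n p : ℕ) (hn : 2 ≤ n) [NeZero p] (hp : 1 ≤ p)
    (L μ κ ξ : ℝ) (hμ : 0 < μ) (hLμ : μ < L) (hκ : κ = L / μ)
    (hξ : ξ = (Real.sqrt ((κ - 1) / n + 1) + 3) / (Real.sqrt ((κ - 1) / n + 1) + 1))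
    (i : Fin n) (k : ℕ) (hk1 : 1 ≤ k) (hkp : k ≤ p)
    (x : EuclideanSpace ℝ (Fin n × Fin p))
    (hx : ∀ j : Fin p, k ≤ (j : ℕ) + 1 → x (i, j) = 0) :
    (∀ a : Fin n × Fin p,
        gradient (fComp1 n p L μ ξ i) x a =
          ((L - μ) / 4) *
              ((∑ b : Fin n × Fin p, Amat n p ξ i a b * x b)
                - (if a = ((i, 0) : Fin n × Fin p) then 1 else 0)) +
            μ * x a) ∧
    (∀ j : Fin p, k + 1 ≤ (j : ℕ) + 1 → gradient (fComp1 n p L μ ξ i) x (i, j) = 0) ∧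
    (∀ a : Fin n × Fin p, a.1 ≠ i → gradient (fComp1 n p L μ ξ i) x a = μ * x a) := by
  have hgrad := (hasGradient_fComp1 n p L μ ξ i x).gradient
  have hg : ∀ a : Fin n × Fin p, gradient (fComp1 n p L μ ξ i) x a =
      ((L - μ) / 4) *
          ((∑ b : Fin n × Fin p, Amat n p ξ i a b * x b)
            - (if a = ((i, 0) : Fin n × Fin p) then 1 else 0)) + μ * x a := by
    intro a
    rw [hgrad, WithLp.ofLp_toLp]
  refine ⟨hg, ?_, ?_⟩
  · intro j hj
    rw [hg]
    have hkj : k ≤ (j : ℕ) := by omega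
    have hxj : x (i, j) = 0 := hx j (by omega)
    have hne : ((i, j) : Fin n × Fin p) ≠ (i, 0) := by
      intro h
      have : (j : ℕ) = (0 : Fin p) := by rw [(Prod.mk.injEq _ _ _ _).mp h |>.2]
      simp at this
      subst this
      simp at hkj
      omega
    rw [if_neg hne, hxj]
    have hsum : ∑ b : Fin n × Fin p, Amat n p ξ i (i, j) b * x b = 0 := by
      refine Finset.sum_eq_zero fun b _ => ?_
      rcases b with ⟨i', j'⟩
      by_cases hi' : i' = i
      · subst hi'
        by_cases hxb : k ≤ (j' : ℕ) + 1
        · rw [hx j' hxb, mul_zero]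
        · have h1 : (j' : ℕ) + 1 < k := by omega
          have hz : Tmat p ξ j j' = 0 := by
            unfold Tmat
            rw [if_neg, if_neg]
            · omega
            · exact fun h => by omega
          simp [Amat, hz]
      · simp [Amat, hi']
    rw [hsum]
    ring
  · intro a ha
    rw [hg]
    have hne : a ≠ ((i, 0) : Fin n × Fin p) := fun h => ha (by rw [h])
    have hsum : ∑ b : Fin n × Fin p, Amat n p ξ i a b * x b = 0 := by
      refine Finset.sum_eq_zero fun b _ => ?_
      simp [Amat, ha]
    rw [hsum, if_neg hne]
    ring
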